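/- If G is a bipartite multigraph and H is a subgraph of G such that the edge set of H forms a clique in the square of the line graph of G (i.e., every two distinct edges of H are at distance at most 2 in G), then |E(H)| ≤ Δ(H)·(σ_G(H) − Δ(H)) ≤ σ_G(H)²/4, where σ_G(H) = max over edges xy of H of d_G(x)+d_G(y). -/

import Mathlib

/-- Two edges of `G` are at distance at most 2 in the line graph sense:
they share an endpoint or some edge of `G` joins an endpoint of one to an
endpoint of the other.  This is adjacency (or equality) in `L(G)²`. -/
def EdgesClose {V : Type*} (G : SimpleGraph V) (e f : Sym2 V) : Prop :=
  ∃ u v, u ∈ e ∧ v ∈ f ∧ (u = v ∨ G.Adj u v)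

/-- If `G` is a bipartite graph and `H` is a subgraph of `G` whose edge set is a
clique in `L(G)²`, then `|E(H)| ≤ Δ(H)·(σ_G(H) − Δ(H)) ≤ σ_G(H)²/4`, where
`σ_G(H)` is the maximum over edges `xy` of `H` of `d_G(x)+d_G(y)` and `Δ(H)` is
the maximum degree of `H`. -/
theorem stmt0 {V : Type*} [Fintype V] (G : SimpleGraph V)
    (hbip : G.Colorable 2) (H : G.Subgraph)
    (hclique : ∀ e ∈ H.edgeSet, ∀ f ∈ H.edgeSet, EdgesClose G e f)
    (σ Δ : ℕ)
    (hσ : IsGreatest {n : ℕ | ∃ x y, H.Adj x y ∧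
      (G.neighborSet x).ncard + (G.neighborSet y).ncard = n} σ)
    (hΔ : IsGreatest {d : ℕ | ∃ v, (H.neighborSet v).ncard = d} Δ) :
    H.edgeSet.ncard ≤ Δ * (σ - Δ) ∧ Δ * (σ - Δ) ≤ σ ^ 2 / 4 := by
  classical
  have part2 : Δ * (σ - Δ) ≤ σ ^ 2 / 4 := by
    rw [Nat.le_div_iff_mul_le (by norm_num : 0 < 4)]
    by_cases h : Δ ≤ σ
    · zify [h]
      nlinarith [sq_nonneg ((σ : ℤ) - 2 * Δ)]
    · rw [Nat.sub_eq_zero_of_le (le_of_not_ge h)]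
      simp
  refine ⟨?_, part2⟩
  obtain ⟨a, ha⟩ := hΔ.1
  have hHle : ∀ v, (H.neighborSet v).ncard ≤ Δ := fun v => hΔ.2 ⟨v, rfl⟩
  have hσ2 : ∀ x y, H.Adj x y →
      (G.neighborSet x).ncard + (G.neighborSet y).ncard ≤ σ :=
    fun x y h => hσ.2 ⟨x, y, h, rfl⟩
  obtain ⟨c⟩ := hbip
  have fin2 : ∀ x y z : Fin 2, x ≠ z → y ≠ z → x = y := by decide
  have fin2' : ∀ x y z : Fin 2, x ≠ y → x ≠ z → y = z := by decide
  have hrep : ∀ e : Sym2 V, ∃ x y, e = s(x, y) := Sym2.ind fun x y => ⟨x, y, rfl⟩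
  set es : Finset (Sym2 V) := (Set.toFinite H.edgeSet).toFinset with hesdef
  have hmem_es : ∀ e : Sym2 V, e ∈ es ↔ e ∈ H.edgeSet := fun e =>
    Set.Finite.mem_toFinset _
  set NF : V → Finset V := fun v => (Set.toFinite (H.neighborSet v)).toFinset
    with hNFdef
  set GFin : V → Finset V := fun v => (Set.toFinite (G.neighborSet v)).toFinset
    with hGFdef
  have hNFmem : ∀ u z, z ∈ NF u ↔ H.Adj u z := by
    intro u z
    simp only [hNFdef, Set.Finite.mem_toFinset, SimpleGraph.Subgraph.mem_neighborSet]
  have hGFmem : ∀ u z, z ∈ GFin u ↔ G.Adj u z := by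
    intro u z
    simp only [hGFdef, Set.Finite.mem_toFinset, SimpleGraph.mem_neighborSet]
  have hNFcard : ∀ v, (NF v).card = (H.neighborSet v).ncard := fun v =>
    (Set.ncard_eq_toFinset_card _ _).symm
  have hGFcard : ∀ v, (GFin v).card = (G.neighborSet v).ncard := fun v =>
    (Set.ncard_eq_toFinset_card _ _).symm
  have hdHΔ : ∀ v, (NF v).card ≤ Δ := fun v => le_of_eq_of_le (hNFcard v) (hHle v)
  have hNsubG : ∀ v, NF v ⊆ GFin v := by
    intro v z hz
    rw [hNFmem] at hz
    rw [hGFmem]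
    exact hz.adj_sub
  -- canonical orientation of the edges
  have master : ∀ e ∈ es, ∃ p : V × V,
      e = s(p.1, p.2) ∧ H.Adj p.1 p.2 ∧ c p.1 = c a ∧ c p.2 ≠ c a := by
    intro e he
    obtain ⟨x, y, rfl⟩ := hrep e
    have hadj : H.Adj x y := SimpleGraph.Subgraph.mem_edgeSet.mp ((hmem_es _).mp he)
    have hcol : c x ≠ c y := c.valid hadj.adj_sub
    by_cases hx : c x = c a
    · exact ⟨(x, y), rfl, hadj, hx, fun h => hcol (hx.trans h.symm)⟩
    · have hy : c y = c a := fin2' (c x) (c y) (c a) hcol hx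
      exact ⟨(y, x), Sym2.eq_swap, hadj.symm, hy, hx⟩
  set P : Sym2 V → V × V := fun e =>
    if h : ∃ p : V × V, e = s(p.1, p.2) ∧ H.Adj p.1 p.2 ∧ c p.1 = c a ∧ c p.2 ≠ c a
    then h.choose else (a, a) with hPdef
  have hP : ∀ e ∈ es, e = s((P e).1, (P e).2) ∧ H.Adj (P e).1 (P e).2 ∧
      c (P e).1 = c a ∧ c (P e).2 ≠ c a := by
    intro e he
    have h := master e he
    simp only [hPdef, dif_pos h]
    exact h.choose_spec
  set φ : Sym2 V → V := fun e => if G.Adj a (P e).2 then (P e).2 else (P e).1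
    with hφdef
  have hcase : ∀ e, (G.Adj a (P e).2 ∧ φ e = (P e).2) ∨
      (¬G.Adj a (P e).2 ∧ φ e = (P e).1) := by
    intro e
    by_cases hb : G.Adj a (P e).2
    · exact Or.inl ⟨hb, by simp only [hφdef, if_pos hb]⟩
    · exact Or.inr ⟨hb, by simp only [hφdef, if_neg hb]⟩
  -- the key use of the clique hypothesis
  have hblue : ∀ e ∈ es, ¬G.Adj a (P e).2 → ∀ t, H.Adj a t → G.Adj (P e).1 t := by
    intro e he hna t hat
    obtain ⟨hq, hadj, hcx, hcy⟩ := hP e he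
    obtain ⟨u, v, hu, hv, huv⟩ :=
      hclique e ((hmem_es e).mp he) s(a, t) (SimpleGraph.Subgraph.mem_edgeSet.mpr hat)
    have hct : c t ≠ c a := (c.valid hat.adj_sub).symm
    rw [hq, Sym2.mem_iff] at hu
    rw [Sym2.mem_iff] at hv
    rcases hu with hu | hu <;> rcases hv with hv | hv <;> rw [hu, hv] at huv
    · rcases huv with h1 | h1
      · rw [h1] at hadj
        exact absurd hadj.adj_sub hna
      · exact absurd hcx (c.valid h1)
    · rcases huv with h1 | h1
      · rw [h1] at hcx
        exact absurd hcx hct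
      · exact h1
    · rcases huv with h1 | h1
      · rw [h1] at hcy
        exact absurd rfl hcy
      · exact absurd h1.symm hna
    · rcases huv with h1 | h1
      · rw [← h1] at hat
        exact absurd hat.adj_sub hna
      · exact absurd (fin2 (c (P e).2) (c t) (c a) hcy hct) (c.valid h1)
  set TF : Finset V := NF a with hTFdef
  set WF : Finset V := (es.image φ) \ GFin a with hWFdef
  have hTcard : TF.card = Δ := by rw [hTFdef, hNFcard, ha]
  have hTFsub : TF ⊆ GFin a := hNsubG a
  have hgΔ : Δ ≤ (GFin a).card := hTcard ▸ Finset.card_le_card hTFsub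
  -- number of incident edges equals degree
  have E1 : ∀ v, (es.filter (fun e => v ∈ e)).card = (NF v).card := by
    intro v
    refine (Finset.card_bij (fun w _ => s(v, w)) ?_ ?_ ?_).symm
    · intro w hw
      rw [hNFmem] at hw
      rw [Finset.mem_filter]
      exact ⟨(hmem_es _).mpr (SimpleGraph.Subgraph.mem_edgeSet.mpr hw), Sym2.mem_mk_left v w⟩
    · intro w1 h1 w2 h2 heq
      exact Sym2.congr_right.mp heq
    · intro e he
      rw [Finset.mem_filter] at he
      obtain ⟨hes2, hv⟩ := he
      obtain ⟨x, y, rfl⟩ := hrep e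
      have hadj : H.Adj x y := SimpleGraph.Subgraph.mem_edgeSet.mp ((hmem_es _).mp hes2)
      rw [Sym2.mem_iff] at hv
      rcases hv with rfl | rfl
      · exact ⟨y, (hNFmem _ _).mpr hadj, rfl⟩
      · exact ⟨x, (hNFmem _ _).mpr hadj.symm, Sym2.eq_swap⟩
  have hφmem_e : ∀ e ∈ es, φ e ∈ e := by
    intro e he
    obtain ⟨hq, -, -, -⟩ := hP e he
    rcases hcase e with ⟨-, hval⟩ | ⟨-, hval⟩
    · rw [hval]
      have h2 : (P e).2 ∈ s((P e).1, (P e).2) := Sym2.mem_mk_right _ _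
      rw [← hq] at h2
      exact h2
    · rw [hval]
      have h2 : (P e).1 ∈ s((P e).1, (P e).2) := Sym2.mem_mk_left _ _
      rw [← hq] at h2
      exact h2
  have hfib_le : ∀ b, (es.filter (fun e => φ e = b)).card ≤ (NF b).card := by
    intro b
    rw [← E1 b]
    apply Finset.card_le_card
    intro e he
    rw [Finset.mem_filter] at he ⊢
    exact ⟨he.1, he.2 ▸ hφmem_e e he.1⟩
  have hcover : ∀ e ∈ es, φ e ∈ GFin a ∪ WF := by
    intro e he
    by_cases hb : φ e ∈ GFin a
    · exact Finset.mem_union_left _ hb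
    · exact Finset.mem_union_right _
        (Finset.mem_sdiff.mpr ⟨Finset.mem_image_of_mem φ he, hb⟩)
  -- blue edges: structure of the fibers over vertices outside N_G(a)
  have hfib_blue : ∀ x, x ∉ GFin a → ∀ e ∈ es, φ e = x →
      ¬G.Adj a (P e).2 ∧ (P e).1 = x := by
    intro x hxa e he hfe
    rcases hcase e with ⟨hadj, hval⟩ | ⟨hna, hval⟩
    · exfalso
      apply hxa
      rw [← hfe, hval]
      exact (hGFmem a _).mpr hadj
    · refine ⟨hna, ?_⟩
      rw [← hval]
      exact hfe
  -- L2 : blue bucket bound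
  have L2 : ∀ x ∈ WF, (es.filter (fun e => φ e = x)).card + (TF ∩ NF x).card ≤ Δ := by
    intro x hx
    have hxa : x ∉ GFin a := (Finset.mem_sdiff.mp hx).2
    have hstep : (es.filter (fun e => φ e = x)).card ≤ ((NF x) \ (GFin a)).card := by
      apply Finset.card_le_card_of_injOn (fun e => (P e).2)
      · intro e he
        simp only [Finset.coe_filter, Set.mem_setOf_eq, Finset.mem_coe] at he ⊢
        obtain ⟨hna, hx1⟩ := hfib_blue x hxa e he.1 he.2
        have hadj := (hP e he.1).2.1
        rw [Finset.mem_sdiff, hNFmem, hGFmem]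
        exact ⟨hx1 ▸ hadj, hna⟩
      · intro e he e' he' heq
        simp only [Finset.coe_filter, Set.mem_setOf_eq] at he he'
        dsimp only at heq
        obtain ⟨hna, hx1⟩ := hfib_blue x hxa e he.1 he.2
        obtain ⟨hna', hx1'⟩ := hfib_blue x hxa e' he'.1 he'.2
        have h1 := (hP e he.1).1
        have h1' := (hP e' he'.1).1
        rw [h1, h1', hx1, hx1', heq]
    have hdisj2 : Disjoint ((NF x) \ (GFin a)) (TF ∩ NF x) := by
      rw [Finset.disjoint_left]
      intro z hz1 hz2
      exact (Finset.mem_sdiff.mp hz1).2 (hTFsub (Finset.mem_inter.mp hz2).1)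
    have hsub2 : ((NF x) \ (GFin a)) ∪ (TF ∩ NF x) ⊆ NF x :=
      Finset.union_subset Finset.sdiff_subset Finset.inter_subset_right
    calc (es.filter (fun e => φ e = x)).card + (TF ∩ NF x).card
        ≤ ((NF x) \ (GFin a)).card + (TF ∩ NF x).card := Nat.add_le_add_right hstep _
      _ = (((NF x) \ (GFin a)) ∪ (TF ∩ NF x)).card :=
          (Finset.card_union_of_disjoint hdisj2).symm
      _ ≤ (NF x).card := Finset.card_le_card hsub2
      _ ≤ Δ := hdHΔ x
  -- every blue vertex is adjacent to all of T
  have hWsubGt : ∀ t, H.Adj a t → WF ⊆ GFin t := by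
    intro t hat x hx
    obtain ⟨himg, hxa⟩ := Finset.mem_sdiff.mp hx
    obtain ⟨e, he, hfe⟩ := Finset.mem_image.mp himg
    obtain ⟨hna, hx1⟩ := hfib_blue x hxa e he hfe
    rw [hGFmem]
    exact (hx1 ▸ hblue e he hna t hat).symm
  -- L3 : red bucket bound for t ∈ T
  have L3 : ∀ t ∈ TF, (es.filter (fun e => φ e = t)).card + WF.card + (GFin a).card
      ≤ σ + (WF ∩ NF t).card := by
    intro t ht
    have hat : H.Adj a t := (hNFmem a t).mp ht
    have h1 : (es.filter (fun e => φ e = t)).card ≤ (NF t).card := hfib_le t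
    have h2 : (NF t ∪ WF).card + (NF t ∩ WF).card = (NF t).card + WF.card :=
      Finset.card_union_add_card_inter _ _
    have h3 : (NF t ∪ WF).card ≤ (GFin t).card :=
      Finset.card_le_card (Finset.union_subset (hNsubG t) (hWsubGt t hat))
    have h4 : (GFin a).card + (GFin t).card ≤ σ := by
      rw [hGFcard, hGFcard]
      exact hσ2 a t hat
    have h5 : (NF t ∩ WF).card = (WF ∩ NF t).card := by rw [Finset.inter_comm]
    omega
  -- L4 : double counting
  have L4 : ∑ t ∈ TF, (WF ∩ NF t).card = ∑ x ∈ WF, (TF ∩ NF x).card := by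
    have h1 : ∀ t, WF ∩ NF t = WF.filter (fun x => H.Adj t x) := by
      intro t
      ext z
      rw [Finset.mem_inter, Finset.mem_filter, hNFmem]
    have h2 : ∀ x, TF ∩ NF x = TF.filter (fun t => H.Adj t x) := by
      intro x
      ext z
      rw [Finset.mem_inter, Finset.mem_filter]
      constructor
      · rintro ⟨hz1, hz2⟩
        exact ⟨hz1, ((hNFmem x z).mp hz2).symm⟩
      · rintro ⟨hz1, hz2⟩
        exact ⟨hz1, (hNFmem x z).mpr hz2.symm⟩
    simp only [h1, h2, Finset.card_filter]
    exact Finset.sum_comm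
  -- assembling the count
  have hsum : es.card = ∑ b ∈ GFin a ∪ WF, (es.filter (fun e => φ e = b)).card :=
    Finset.card_eq_sum_card_fiberwise hcover
  have hdisjW : Disjoint (GFin a) WF := Finset.disjoint_sdiff
  rw [Finset.sum_union hdisjW] at hsum
  have hsplit : ∑ b ∈ GFin a, (es.filter (fun e => φ e = b)).card
      = ∑ b ∈ GFin a \ TF, (es.filter (fun e => φ e = b)).card
        + ∑ b ∈ TF, (es.filter (fun e => φ e = b)).card :=
    (Finset.sum_sdiff hTFsub).symm
  have A1 : es.card = (∑ b ∈ GFin a \ TF, (es.filter (fun e => φ e = b)).card)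
      + (∑ b ∈ TF, (es.filter (fun e => φ e = b)).card)
      + (∑ b ∈ WF, (es.filter (fun e => φ e = b)).card) := by
    rw [hsum, hsplit]
  have A2 : (∑ b ∈ TF, (es.filter (fun e => φ e = b)).card)
      + Δ * WF.card + Δ * (GFin a).card
      ≤ Δ * σ + ∑ t ∈ TF, (WF ∩ NF t).card := by
    have h := Finset.sum_le_sum L3
    rw [Finset.sum_add_distrib, Finset.sum_add_distrib, Finset.sum_add_distrib,
      Finset.sum_const, Finset.sum_const, Finset.sum_const, hTcard,
      smul_eq_mul, smul_eq_mul, smul_eq_mul] at h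
    exact h
  have A3 : (∑ b ∈ GFin a \ TF, (es.filter (fun e => φ e = b)).card)
      ≤ ((GFin a).card - Δ) * Δ := by
    have h := Finset.sum_le_card_nsmul (GFin a \ TF)
      (fun b => (es.filter (fun e => φ e = b)).card) Δ
      (fun b _ => le_trans (hfib_le b) (hdHΔ b))
    rw [Finset.card_sdiff_of_subset hTFsub, hTcard, smul_eq_mul] at h
    exact h
  have A4 : (∑ b ∈ WF, (es.filter (fun e => φ e = b)).card)
      + ∑ t ∈ TF, (WF ∩ NF t).card ≤ WF.card * Δ := by
    rw [L4]
    have h := Finset.sum_le_sum L2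
    rw [Finset.sum_add_distrib, Finset.sum_const, smul_eq_mul] at h
    exact h
  set n1 : ℕ := ∑ b ∈ TF, (es.filter (fun e => φ e = b)).card with hn1
  set n2 : ℕ := ∑ b ∈ GFin a \ TF, (es.filter (fun e => φ e = b)).card with hn2
  set n3 : ℕ := ∑ b ∈ WF, (es.filter (fun e => φ e = b)).card with hn3
  set R : ℕ := ∑ t ∈ TF, (WF ∩ NF t).card with hR
  set w : ℕ := WF.card with hw
  set g : ℕ := (GFin a).card with hg
  have hfinal : (es.card : ℤ) ≤ (Δ : ℤ) * σ - Δ * Δ := by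
    have hcast3 : ((g - Δ : ℕ) : ℤ) = (g : ℤ) - Δ := Nat.cast_sub hgΔ
    have c1 : (es.card : ℤ) = n2 + n1 + n3 := by exact_mod_cast A1
    have c2 : (n1 : ℤ) + Δ * w + Δ * g ≤ Δ * σ + R := by exact_mod_cast A2
    have c3 : (n2 : ℤ) ≤ ((g : ℤ) - Δ) * Δ := by
      rw [← hcast3]
      exact_mod_cast A3
    have c4 : (n3 : ℤ) + R ≤ w * Δ := by exact_mod_cast A4
    have c5 : ((g : ℤ) - Δ) * Δ = g * Δ - Δ * Δ := by ring
    linarith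
  have hedge : H.edgeSet.ncard = es.card := Set.ncard_eq_toFinset_card _ _
  rw [hedge]
  by_cases hΔ0 : Δ = 0
  · subst hΔ0
    have h0 : (0 : ℤ) ≤ (es.card : ℤ) := Int.natCast_nonneg _
    have : (es.card : ℤ) ≤ 0 := by
      simpa using hfinal
    have hz : es.card = 0 := by exact_mod_cast le_antisymm this h0
    simp [hz]
  · have hΔpos : 0 < Δ := Nat.pos_of_ne_zero hΔ0
    have hΔσ : Δ ≤ σ := by
      by_contra hcon
      push_neg at hcon
      have h0 : (0 : ℤ) ≤ (es.card : ℤ) := Int.natCast_nonneg _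
      have hσΔ : (σ : ℤ) < Δ := by exact_mod_cast hcon
      have hΔz : (0 : ℤ) < Δ := by exact_mod_cast hΔpos
      have hmul : (Δ : ℤ) * σ < Δ * Δ := mul_lt_mul_of_pos_left hσΔ hΔz
      linarith
    zify [hΔσ]
    have hexp : (Δ : ℤ) * (σ - Δ) = Δ * σ - Δ * Δ := by ring
    linarith
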